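/- Let p be a prime and G a finite group. Let P be a normal p-subgroup of G with C_G(P) ≤ P, and let S be a Sylow p-subgroup of G. Let T be a subgroup of S which is normal in S (equivalently, T ≤ S and S ≤ N_G(T)). Let N ≤ M be subgroups of G such that: T ≤ N; M ≤ N_G(T); M is normal in N_G(T); M ∩ S = T; and M ≤ N ⊔ (C_G(T) ∩ M) (i.e., M is generated by N together with C_M(T)). Then M = N. -/

import Mathlib

/-- The group-theoretic kernel of the Uniqueness Lemma: with `G` of
characteristic `p`, `S` a Sylow `p`-subgroup, `T ≤ S` normal in `S`,
`N ≤ M ≤ N_G(T)` with `M` normal in `N_G(T)`, `T ≤ N`, `M ∩ S = T` and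
`M` generated by `N` together with `C_M(T)`, we get `M = N`. -/
theorem stmt_5 {p : ℕ} (hp : p.Prime) {G : Type*} [Group G] [Finite G]
    (P : Subgroup G) (hPn : P.Normal) (hP : IsPGroup p P)
    (hC : Subgroup.centralizer (P : Set G) ≤ P)
    (S : Sylow p G) (T : Subgroup G) (hTS : T ≤ S)
    (hSn : (S : Subgroup G) ≤ Subgroup.normalizer (T : Set G))
    (N M : Subgroup G) (hNM : N ≤ M) (hTN : T ≤ N)
    (hMle : M ≤ Subgroup.normalizer (T : Set G)) (hMn : (M.subgroupOf (Subgroup.normalizer (T : Set G))).Normal)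
    (hMS : M ⊓ S = T)
    (hgen : M ≤ N ⊔ (Subgroup.centralizer (T : Set G) ⊓ M)) :
    M = N := by
  haveI : Fact p.Prime := ⟨hp⟩
  haveI := hPn
  haveI : Finite (Sylow p G) :=
    Finite.of_injective (fun P : Sylow p G => (P : Set G)) SetLike.coe_injective
  -- P ≤ S
  have hPS : P ≤ (S : Subgroup G) := by
    have h1 : IsPGroup p ((P ⊔ (S : Subgroup G) : Subgroup G)) :=
      IsPGroup.to_sup_of_normal_left hP S.isPGroup'
    have h2 := S.is_maximal' h1 le_sup_right
    exact le_sup_left.trans h2.le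
  set C : Subgroup G := Subgroup.centralizer (T : Set G) ⊓ M with hCdef
  have hCM : C ≤ M := inf_le_right
  have hCH : C ≤ (Subgroup.normalizer (T : Set G)) := hCM.trans hMle
  -- conjugation by normalizer elements preserves C
  have hconj : ∀ h ∈ (Subgroup.normalizer (T : Set G)), ∀ c ∈ C, h * c * h⁻¹ ∈ C := by
    intro h hh c hc
    obtain ⟨hc1, hc2⟩ := Subgroup.mem_inf.mp hc
    refine Subgroup.mem_inf.mpr ⟨?_, ?_⟩
    · rw [Subgroup.mem_centralizer_iff]
      intro t ht
      have ht' : h⁻¹ * t * h ∈ T := (Subgroup.mem_normalizer_iff''.mp hh t).mp ht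
      have hct : (h⁻¹ * t * h) * c = c * (h⁻¹ * t * h) :=
        Subgroup.mem_centralizer_iff.mp hc1 _ ht'
      calc t * (h * c * h⁻¹) = h * ((h⁻¹ * t * h) * c) * h⁻¹ := by group
        _ = h * (c * (h⁻¹ * t * h)) * h⁻¹ := by rw [hct]
        _ = h * c * h⁻¹ * t := by group
    · have hcH : c ∈ (Subgroup.normalizer (T : Set G)) := hMle hc2
      have hm : (⟨c, hcH⟩ : (Subgroup.normalizer (T : Set G))) ∈ M.subgroupOf (Subgroup.normalizer (T : Set G)) :=
        Subgroup.mem_subgroupOf.mpr hc2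
      have := hMn.conj_mem _ hm ⟨h, hh⟩
      exact Subgroup.mem_subgroupOf.mp this
  -- p-elements of C centralize C
  have hpelem : ∀ x ∈ C, (∃ n : ℕ, x ^ p ^ n = 1) → ∀ c ∈ C, x * c = c * x := by
    intro x hx hxp c hc
    obtain ⟨n, hxn⟩ := hxp
    have hxH : x ∈ (Subgroup.normalizer (T : Set G)) := hCH hx
    set x' : (Subgroup.normalizer (T : Set G)) := ⟨x, hxH⟩ with hx'def
    have hx'p : IsPGroup p (Subgroup.zpowers x') := by
      intro q
      refine ⟨n, ?_⟩
      obtain ⟨m, hm⟩ := q.2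
      have : (q : (Subgroup.normalizer (T : Set G))) ^ p ^ n = 1 := by
        rw [← hm, ← zpow_natCast, ← zpow_mul, mul_comm, zpow_mul, zpow_natCast]
        have : x' ^ p ^ n = 1 := by
          ext; simpa using hxn
        rw [this, one_zpow]
      exact Subtype.ext (by simpa using this)
    obtain ⟨R, hR⟩ := hx'p.exists_le_sylow
    obtain ⟨h, hh⟩ := MulAction.exists_smul_eq (↥(Subgroup.normalizer (T : Set G))) (S.subtype hSn) R
    have hx'R : x' ∈ R := hR (Subgroup.mem_zpowers x')
    rw [← hh] at hx'R
    have hy'S : h⁻¹ * x' * h ∈ S.subtype hSn := by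
      have := (Subgroup.mem_pointwise_smul_iff_inv_smul_mem (a := MulAut.conj h)
        (S := ((S.subtype hSn : Sylow p _) : Subgroup (Subgroup.normalizer (T : Set G)))) (x := x')).mp hx'R
      show h⁻¹ * x' * h ∈ ((S.subtype hSn : Sylow p _) : Subgroup (Subgroup.normalizer (T : Set G)))
      simpa [MulAut.smul_def, mul_assoc] using this
    set y : G := (h : G)⁻¹ * x * (h : G) with hydef
    have hyS : y ∈ (S : Subgroup G) := by
      have h5 : h⁻¹ * x' * h ∈ ((S.subtype hSn : Sylow p ↥(Subgroup.normalizer (T : Set G))) : Subgroup ↥(Subgroup.normalizer (T : Set G))) := hy'S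
      rw [Sylow.coe_subtype, Subgroup.mem_subgroupOf] at h5
      simpa using h5
    have hyC : y ∈ C := by
      have := hconj ((h : G)⁻¹) (inv_mem h.2) x hx
      rw [inv_inv] at this
      exact this
    have hyT : y ∈ T := by
      rw [← hMS]; exact ⟨hCM hyC, hyS⟩
    -- y centralizes C; transport back to x
    have hyc : ∀ d ∈ C, y * d = d * y := by
      intro d hd
      exact Subgroup.mem_centralizer_iff.mp (Subgroup.mem_inf.mp hd).1 y hyT
    have hdC : (h : G)⁻¹ * c * (h : G) ∈ C := by
      have := hconj ((h : G)⁻¹) (inv_mem h.2) c hc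
      rw [inv_inv] at this
      exact this
    have hkey := hyc _ hdC
    have hxy : x = (h : G) * y * (h : G)⁻¹ := by rw [hydef]; group
    rw [hxy]
    calc (h : G) * y * (h : G)⁻¹ * c
        = (h : G) * (y * ((h : G)⁻¹ * c * (h : G))) * (h : G)⁻¹ := by group
      _ = (h : G) * (((h : G)⁻¹ * c * (h : G)) * y) * (h : G)⁻¹ := by rw [hkey]
      _ = c * ((h : G) * y * (h : G)⁻¹) := by group
  -- Burnside transfer in C
  obtain ⟨Q⟩ : Nonempty (Sylow p C) := inferInstance
  have hQcent : ∀ q ∈ (Q : Subgroup C), ∀ z : C, q * z = z * q := by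
    intro q hq z
    obtain ⟨k, hk⟩ := Q.isPGroup' ⟨q, hq⟩
    have hqk : (q : G) ^ p ^ k = 1 := by
      have := congrArg (fun w : (Q : Subgroup C) => ((w : C) : G)) hk
      simpa using this
    have := hpelem (q : G) q.2 ⟨k, hqk⟩ (z : G) z.2
    exact Subtype.ext this
  have hQ : (Subgroup.normalizer ((Q : Subgroup C) : Set C)) ≤ Subgroup.centralizer (Q : Set C) := by
    intro z _
    rw [Subgroup.mem_centralizer_iff]
    intro q hq
    exact hQcent q hq z
  set K : Subgroup G := ((MonoidHom.transferSylow Q hQ).ker).map C.subtype with hKdef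
  have hKC : K ≤ C := by
    rw [hKdef]; exact Subgroup.map_subtype_le _
  have hK1 : ∀ x ∈ K, ¬ p ∣ orderOf x := by
    intro x hx hdvd
    obtain ⟨k, hk, rfl⟩ := hx
    have h1 : orderOf ((k : C) : G) = orderOf (k : C) := Subgroup.orderOf_coe _
    have h2 : orderOf (⟨k, hk⟩ : (MonoidHom.transferSylow Q hQ).ker) = orderOf (k : C) :=
      Subgroup.orderOf_mk _ _
    have h3 : orderOf (⟨k, hk⟩ : (MonoidHom.transferSylow Q hQ).ker)
        ∣ Nat.card (MonoidHom.transferSylow Q hQ).ker := orderOf_dvd_natCard _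
    have hdvd' : p ∣ orderOf ((k : C) : G) := hdvd
    rw [h1, ← h2] at hdvd'
    exact MonoidHom.not_dvd_card_ker_transferSylow Q hQ (hdvd'.trans h3)
  have hK2 : ∀ x ∈ C, ¬ p ∣ orderOf x → x ∈ K := by
    intro x hx hord
    set x' : C := ⟨x, hx⟩ with hx'def
    have hker : x' ∈ (MonoidHom.transferSylow Q hQ).ker := by
      rw [MonoidHom.mem_ker]
      have h1 : orderOf (MonoidHom.transferSylow Q hQ x') ∣ orderOf x' :=
        orderOf_map_dvd _ _
      have h2 : orderOf x' = orderOf x := Subgroup.orderOf_mk _ _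
      obtain ⟨k, hk⟩ := Q.isPGroup' (MonoidHom.transferSylow Q hQ x')
      have h3 : orderOf (MonoidHom.transferSylow Q hQ x') ∣ p ^ k :=
        orderOf_dvd_of_pow_eq_one hk
      obtain ⟨j, hj, hje⟩ := (Nat.dvd_prime_pow hp).mp h3
      rcases Nat.eq_zero_or_pos j with hj0 | hjpos
      · rw [← orderOf_eq_one_iff, hje, hj0, pow_zero]
      · exfalso
        apply hord
        rw [← h2]
        exact dvd_trans (dvd_trans (dvd_pow_self p hjpos.ne') hje.symm.dvd) h1
    exact ⟨x', hker, rfl⟩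
  have hKP : ∀ x ∈ K, x ∈ P → x = 1 := by
    intro x hxK hxP
    obtain ⟨k, hk⟩ := hP ⟨x, hxP⟩
    have hxk : x ^ p ^ k = 1 := by
      have := congrArg (fun w : P => (w : G)) hk
      simpa using this
    have h3 : orderOf x ∣ p ^ k := orderOf_dvd_of_pow_eq_one hxk
    obtain ⟨j, hj, hje⟩ := (Nat.dvd_prime_pow hp).mp h3
    rcases Nat.eq_zero_or_pos j with hj0 | hjpos
    · rw [← orderOf_eq_one_iff, hje, hj0, pow_zero]
    · exact absurd (dvd_trans (dvd_pow_self p hjpos.ne') hje.symm.dvd) (hK1 x hxK)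
  have hKconj : ∀ g ∈ (Subgroup.normalizer (T : Set G)), ∀ x ∈ K, g * x * g⁻¹ ∈ K := by
    intro g hg x hx
    have hxC : x ∈ C := hKC hx
    have h1 : g * x * g⁻¹ ∈ C := hconj g hg x hxC
    have h2 : orderOf (g * x * g⁻¹) = orderOf x := by
      have : SemiconjBy g x (g * x * g⁻¹) := by unfold SemiconjBy; group
      exact (SemiconjBy.orderOf_eq g this).symm
    exact hK2 _ h1 (h2 ▸ hK1 x hx)
  have hKbot : ∀ x ∈ K, x = 1 := by
    intro k hk
    have hkC : k ∈ C := hKC hk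
    have hcomm : ∀ g ∈ P, g * k = k * g := by
      intro g hg
      have hgH : g ∈ (Subgroup.normalizer (T : Set G)) := hSn (hPS hg)
      have hc1 : k * (g * k⁻¹ * g⁻¹) ∈ K :=
        mul_mem hk (hKconj g hgH _ (inv_mem hk))
      have hc2 : k * (g * k⁻¹ * g⁻¹) ∈ P := by
        have : k * g * k⁻¹ ∈ P := hPn.conj_mem g hg k
        have := mul_mem this (inv_mem hg)
        simpa [mul_assoc] using this
      have hc3 : k * (g * k⁻¹ * g⁻¹) = 1 := hKP _ hc1 hc2
      have : k * g = g * k := by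
        have h4 : k * g * (g * k)⁻¹ = 1 := by
          rw [← hc3]; group
        exact mul_inv_eq_one.mp h4
      exact this.symm
    have hkcent : k ∈ Subgroup.centralizer (P : Set G) :=
      Subgroup.mem_centralizer_iff.mpr (fun g hg => (hcomm g hg))
    exact hKP k hk (hC hkcent)
  -- C is a p-group
  have hCp : IsPGroup p C := by
    intro x
    have ho : orderOf (x : G) ≠ 0 := (orderOf_pos (x : G)).ne'
    set o := orderOf (x : G) with hodef
    set k := o.factorization p with hkdef
    set y : G := (x : G) ^ p ^ k with hydef
    have hyC : y ∈ C := C.pow_mem x.2 _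
    have hyo : orderOf y = ordCompl[p] o := by
      rw [hydef, orderOf_pow, ← hodef, Nat.gcd_eq_right (Nat.ordProj_dvd o p)]
    have hynd : ¬ p ∣ orderOf y := by
      rw [hyo]; exact Nat.not_dvd_ordCompl hp ho
    have hy1 : y = 1 := hKbot y (hK2 y hyC hynd)
    refine ⟨k, ?_⟩
    exact Subtype.ext (by simpa using hy1)
  -- C ≤ S hence C ≤ T ≤ N
  have hSC : (S : Subgroup G) ≤ (Subgroup.normalizer (C : Set G)) := by
    intro s hs
    rw [Subgroup.mem_normalizer_iff]
    intro c
    constructor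
    · exact fun hc => hconj s (hSn hs) c hc
    · intro hc
      have := hconj s⁻¹ (inv_mem (hSn hs)) _ hc
      simpa [mul_assoc] using this
  have hCpS : IsPGroup p ((C ⊔ (S : Subgroup G) : Subgroup G)) :=
    IsPGroup.to_sup_of_normal_left' hCp S.isPGroup' hSC
  have hCS : C ≤ (S : Subgroup G) := le_sup_left.trans (S.is_maximal' hCpS le_sup_right).le
  have hCT : C ≤ T := by
    rw [← hMS]; exact le_inf hCM hCS
  exact le_antisymm (hgen.trans (sup_le le_rfl (hCT.trans hTN))) hNM
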